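/- For every Boolean network f of dimension n, the following are equivalent: (1) f is Lille, i.e. f is commutative and idempotent (f ∘ f = f); (2) for all x ∈ 𝔹^n and all y ∈ [x, f(x)], [y, f(y)] = [y, f(x)]; (3) f^{(S,T)} = f^{(S ∪ T)} for all S, T ⊆ [n]. -/

import Mathlib

/-!  Common definitions: Boolean networks on `Fin n → Bool`. -/

/-- The update `f^{(S)}` of the coordinates in `S` according to `f`. -/
def upd {n : ℕ} (f : (Fin n → Bool) → Fin n → Bool) (S : Finset (Fin n)) :
    (Fin n → Bool) → Fin n → Bool :=
  fun x i => if i ∈ S then f x i else x i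

/-- `f^{(S,T)} = f^{(T)} ∘ f^{(S)}`. -/
def upd2 {n : ℕ} (f : (Fin n → Bool) → Fin n → Bool) (S T : Finset (Fin n)) :
    (Fin n → Bool) → Fin n → Bool :=
  upd f T ∘ upd f S

/-- `Δ(x,y)`, the set of coordinates where `x` and `y` differ. -/
def delta {n : ℕ} (x y : Fin n → Bool) : Set (Fin n) := {i | x i ≠ y i}

/-- Hamming distance. -/
noncomputable def hdist {n : ℕ} (x y : Fin n → Bool) : ℕ := (delta x y).ncard

/-- The interval (subcube) `[x,y]`. -/
def interval {n : ℕ} (x y : Fin n → Bool) : Set (Fin n → Bool) :=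
  {z | delta x z ⊆ delta x y}

/-- A subcube of `𝔹^n`: fix the coordinates in `S` to `0` and those in `T` to `1`. -/
def IsSubcube {n : ℕ} (X : Set (Fin n → Bool)) : Prop :=
  ∃ S T : Set (Fin n), Disjoint S T ∧
    X = {x | (∀ i ∈ S, x i = false) ∧ (∀ i ∈ T, x i = true)}

/-- The partial order `f ⊑ g` on Boolean networks. -/
def BNle {n : ℕ} (f g : (Fin n → Bool) → Fin n → Bool) : Prop :=
  ∀ x, delta x (f x) ⊆ delta x (g x)

/-- A trapspace of `f`: an invariant subcube. -/
def IsTrapspace {n : ℕ} (f : (Fin n → Bool) → Fin n → Bool)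
    (X : Set (Fin n → Bool)) : Prop :=
  IsSubcube X ∧ ∀ x ∈ X, f x ∈ X

/-- The collection of all trapspaces of `f`. -/
def trapspaces {n : ℕ} (f : (Fin n → Bool) → Fin n → Bool) :
    Set (Set (Fin n → Bool)) :=
  {X | IsTrapspace f X}

/-- The principal trapspace `T_f(x)`: the smallest trapspace of `f` containing `x`. -/
def Tprin {n : ℕ} (f : (Fin n → Bool) → Fin n → Bool) (x : Fin n → Bool) :
    Set (Fin n → Bool) :=
  ⋂₀ {X | IsTrapspace f X ∧ x ∈ X}

/-- The collection of principal trapspaces of `f`. -/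
def PT {n : ℕ} (f : (Fin n → Bool) → Fin n → Bool) : Set (Set (Fin n → Bool)) :=
  {X | ∃ x, X = Tprin f x}

-- The opposite of `x` in a subcube `X` containing `x`: the coordinate `i` is flipped
-- iff some element of `X` differs from `x` there; so `[x, opp X x] = X` when `X` is a
-- subcube containing `x`.
open scoped Classical in
noncomputable def opp {n : ℕ} (X : Set (Fin n → Bool)) (x : Fin n → Bool) :
    Fin n → Bool :=
  fun i => if ∃ y ∈ X, y i ≠ x i then !(x i) else x i

/-- The trapping closure `f^T`, characterised by `[x, f^T(x)] = T_f(x)`. -/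
noncomputable def trapClosure {n : ℕ} (f : (Fin n → Bool) → Fin n → Bool) :
    (Fin n → Bool) → Fin n → Bool :=
  fun x => opp (Tprin f x) x

/-- The general asynchronous graph of `f`, as a relation on `𝔹^n`. -/
def GA {n : ℕ} (f : (Fin n → Bool) → Fin n → Bool) :
    (Fin n → Bool) → (Fin n → Bool) → Prop :=
  fun x y => ∃ S : Finset (Fin n), y = upd f S x

/-- The asynchronous graph of `f`, as a relation on `𝔹^n`. -/
def Agraph {n : ℕ} (f : (Fin n → Bool) → Fin n → Bool) :
    (Fin n → Bool) → (Fin n → Bool) → Prop :=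
  fun x y => ∃ i : Fin n, y = upd f {i} x

/-- The trapping graph of `f`: an edge `(x,y)` iff `y ∈ T_f(x)`. -/
def TG {n : ℕ} (f : (Fin n → Bool) → Fin n → Bool) :
    (Fin n → Bool) → (Fin n → Bool) → Prop :=
  fun x y => y ∈ Tprin f x

/-- A network is trapping if its general asynchronous graph is transitive. -/
def IsTrapping {n : ℕ} (f : (Fin n → Bool) → Fin n → Bool) : Prop :=
  Transitive (GA f)

/-- A commutative Boolean network: `f^{(i,j)} = f^{(j,i)}` for all `i,j`. -/
def IsCommutative' {n : ℕ} (f : (Fin n → Bool) → Fin n → Bool) : Prop :=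
  ∀ i j : Fin n, upd2 f {i} {j} = upd2 f {j} {i}

/-- `𝒜(x)`: the intersection of all members of `𝒜` containing `x`
(`= 𝔹^n` if no member contains `x`, since `⋂₀ ∅ = univ`). -/
def collAt {n : ℕ} (𝒜 : Set (Set (Fin n → Bool))) (x : Fin n → Bool) :
    Set (Fin n → Bool) :=
  ⋂₀ {A ∈ 𝒜 | x ∈ A}

/-- The network `F(𝒜)`, characterised by `[x, F(𝒜)(x)] = 𝒜(x)`. -/
noncomputable def Fnet {n : ℕ} (𝒜 : Set (Set (Fin n → Bool))) :
    (Fin n → Bool) → Fin n → Bool :=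
  fun x => opp (collAt 𝒜 x) x

/-- A collection of subcubes is pre-principal if `𝒬 = {𝒬(x) : x ∈ 𝔹^n}`. -/
def PrePrincipal {n : ℕ} (𝒬 : Set (Set (Fin n → Bool))) : Prop :=
  𝒬 = {X | ∃ x, X = collAt 𝒬 x}

/-- `λ(𝒜)`: unions of subcollections of `𝒜` that are subcubes. -/
def lamColl {n : ℕ} (𝒜 : Set (Set (Fin n → Bool))) : Set (Set (Fin n → Bool)) :=
  {X | ∃ ℛ ⊆ 𝒜, X = ⋃₀ ℛ ∧ IsSubcube X}

/-- `μ(𝒜) = {𝒜(x) : x ∈ 𝔹^n}`. -/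
def muColl {n : ℕ} (𝒜 : Set (Set (Fin n → Bool))) : Set (Set (Fin n → Bool)) :=
  {X | ∃ x, X = collAt 𝒜 x}

/-- A pre-ideal collection of subcubes. -/
def PreIdeal {n : ℕ} (𝒥 : Set (Set (Fin n → Bool))) : Prop :=
  Set.univ ∈ 𝒥 ∧
  (∀ A ∈ 𝒥, ∀ B ∈ 𝒥, (A ∩ B).Nonempty → A ∩ B ∈ 𝒥) ∧
  (∀ ℛ ⊆ 𝒥, IsSubcube (⋃₀ ℛ) → ⋃₀ ℛ ∈ 𝒥)

/-- The collection of minimal trapspaces of `f`. -/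
def MT {n : ℕ} (f : (Fin n → Bool) → Fin n → Bool) : Set (Set (Fin n → Bool)) :=
  {X | IsTrapspace f X ∧ ∀ Y, IsTrapspace f Y → ¬ Y ⊂ X}

/-- `M(f)`: the union of the minimal trapspaces of `f`. -/
def Mset {n : ℕ} (f : (Fin n → Bool) → Fin n → Bool) : Set (Fin n → Bool) :=
  ⋃₀ MT f

-- The min-trapping extension `f^M`: `[x, f^M(x)] = T_f(x)` if `x ∈ M(f)`,
-- and `f^M(x) = ¬x` otherwise.
open scoped Classical in
noncomputable def minExt {n : ℕ} (f : (Fin n → Bool) → Fin n → Bool) :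
    (Fin n → Bool) → Fin n → Bool :=
  fun x => if x ∈ Mset f then opp (Tprin f x) x else fun i => !(x i)

-- helpers
lemma bool_eq_of_ne_of_ne {a b c : Bool} (h1 : a ≠ b) (h2 : a ≠ c) : b = c := by
  cases a <;> cases b <;> cases c <;> simp_all

lemma upd_single_same {n : ℕ} (f : (Fin n → Bool) → Fin n → Bool) (x : Fin n → Bool)
    (k : Fin n) : upd f {k} x k = f x k := by simp [upd]

lemma upd_single_ne {n : ℕ} (f : (Fin n → Bool) → Fin n → Bool) (x : Fin n → Bool)
    {k l : Fin n} (h : l ≠ k) : upd f {k} x l = x l := by simp [upd, h]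

lemma offdiag {n : ℕ} {f : (Fin n → Bool) → Fin n → Bool} (hc : IsCommutative' f)
    (x : Fin n → Bool) {k l : Fin n} (h : l ≠ k) :
    f (upd f {k} x) l = f x l := by
  have h2 := congrFun (congrFun (hc k l) x) l
  simp only [upd2, Function.comp_apply] at h2
  rwa [upd_single_same, upd_single_ne f _ h, upd_single_same] at h2

lemma lemP {n : ℕ} {f : (Fin n → Bool) → Fin n → Bool} (hc : IsCommutative' f) :
    ∀ m : ℕ, ∀ x y : Fin n → Bool,
      (∀ k, x k ≠ y k → x k ≠ f x k) →
      (Finset.univ.filter fun k => x k ≠ y k).card = m →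
      ∀ l, f y l = if x l ≠ y l ∧ f (upd f {l} x) l = x l then x l else f x l := by
  intro m
  induction m using Nat.strong_induction_on with
  | _ m ih =>
  intro x y hsub hcard l
  rcases Nat.lt_or_ge m 2 with hm | hm
  · interval_cases m
    · -- card 0 : y = x
      rw [Finset.card_eq_zero] at hcard
      have hyx : y = x := by
        funext k
        by_contra hk
        have : k ∈ (Finset.univ.filter fun k => x k ≠ y k) := by
          simp [Ne.symm hk]
        simp [hcard] at this
      subst hyx
      simp
    · -- card 1 : y = upd f {i} x
      rw [Finset.card_eq_one] at hcard
      obtain ⟨i, hi⟩ := hcard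
      have hmem : ∀ k, x k ≠ y k ↔ k = i := by
        intro k
        constructor
        · intro hk
          have : k ∈ (Finset.univ.filter fun k => x k ≠ y k) := by simp [hk]
          simpa [hi] using this
        · intro hk
          have hm2 : i ∈ (Finset.univ.filter fun k => x k ≠ y k) := by
            rw [hi]; exact Finset.mem_singleton_self i
          rw [hk]
          simpa using hm2
      have hxyi : x i ≠ y i := (hmem i).mpr rfl
      have hyu : y = upd f {i} x := by
        funext k
        by_cases hk : k = i
        · subst hk
          rw [upd_single_same]
          exact (bool_eq_of_ne_of_ne hxyi (hsub k hxyi)).symm ▸ rfl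
        · rw [upd_single_ne f _ hk]
          by_contra hne
          exact hk ((hmem k).mp (fun h => hne h.symm))
      by_cases hl : l = i
      · subst hl
        by_cases hbad : f y l = x l
        · rw [if_pos ⟨hxyi, by rw [← hyu]; exact hbad⟩]
          rw [← hbad]
        · have hgood : f y l = f x l := bool_eq_of_ne_of_ne (Ne.symm hbad) (hsub l hxyi)
          rw [if_neg (fun h => hbad (by rw [hyu]; exact h.2))]; exact hgood
      · have h1 : f y l = f x l := by rw [hyu]; exact offdiag hc x hl
        have h2 : ¬ (x l ≠ y l) := fun h => hl ((hmem l).mp h)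
        simp [h2, h1]
  · -- card ≥ 2
    have h1lt : 1 < (Finset.univ.filter fun k => x k ≠ y k).card := by omega
    obtain ⟨i, hiS, j, hjS, hij⟩ := Finset.one_lt_card.mp h1lt
    simp only [Finset.mem_filter, Finset.mem_univ, true_and] at hiS hjS
    set b := Function.update y j (x j) with hbdef
    set c := Function.update y i (x i) with hcdef
    have hb_ne : ∀ k, k ≠ j → b k = y k := fun k hk => Function.update_of_ne hk _ _
    have hc_ne : ∀ k, k ≠ i → c k = y k := fun k hk => Function.update_of_ne hk _ _
    have hbj : b j = x j := Function.update_self _ _ _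
    have hci : c i = x i := Function.update_self _ _ _
    -- filter sets for b and c
    have hfb : (Finset.univ.filter fun k => x k ≠ b k)
        = (Finset.univ.filter fun k => x k ≠ y k).erase j := by
      ext k
      simp only [Finset.mem_filter, Finset.mem_univ, true_and, Finset.mem_erase]
      constructor
      · intro hk
        have hkj : k ≠ j := by rintro rfl; exact hk hbj.symm
        exact ⟨hkj, by rwa [hb_ne k hkj] at hk⟩
      · rintro ⟨hkj, hk⟩; rwa [hb_ne k hkj]
    have hfc : (Finset.univ.filter fun k => x k ≠ c k)
        = (Finset.univ.filter fun k => x k ≠ y k).erase i := by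
      ext k
      simp only [Finset.mem_filter, Finset.mem_univ, true_and, Finset.mem_erase]
      constructor
      · intro hk
        have hki : k ≠ i := by rintro rfl; exact hk hci.symm
        exact ⟨hki, by rwa [hc_ne k hki] at hk⟩
      · rintro ⟨hki, hk⟩; rwa [hc_ne k hki]
    have hjmem : j ∈ (Finset.univ.filter fun k => x k ≠ y k) := by simp [hjS]
    have himem : i ∈ (Finset.univ.filter fun k => x k ≠ y k) := by simp [hiS]
    have hcardb : (Finset.univ.filter fun k => x k ≠ b k).card = m - 1 := by
      rw [hfb, Finset.card_erase_of_mem hjmem, hcard]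
    have hcardc : (Finset.univ.filter fun k => x k ≠ c k).card = m - 1 := by
      rw [hfc, Finset.card_erase_of_mem himem, hcard]
    have hsubb : ∀ k, x k ≠ b k → x k ≠ f x k := by
      intro k hk
      have hkj : k ≠ j := by rintro rfl; exact hk hbj.symm
      exact hsub k (by rwa [hb_ne k hkj] at hk)
    have hsubc : ∀ k, x k ≠ c k → x k ≠ f x k := by
      intro k hk
      have hki : k ≠ i := by rintro rfl; exact hk hci.symm
      exact hsub k (by rwa [hc_ne k hki] at hk)
    have ihb := ih (m-1) (by omega) x b hsubb hcardb
    have ihc := ih (m-1) (by omega) x c hsubc hcardc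
    -- y = upd f {j} b
    have hfbj : f b j = f x j := by
      have := ihb j
      simp [hbj] at this
      exact this
    have hyj : y j = f x j := bool_eq_of_ne_of_ne hjS (hsub j hjS)
    have hyb : y = upd f {j} b := by
      funext k
      by_cases hk : k = j
      · subst hk; rw [upd_single_same, hfbj, hyj]
      · rw [upd_single_ne f _ hk, hb_ne k hk]
    -- y = upd f {i} c
    have hfci : f c i = f x i := by
      have := ihc i
      simp [hci] at this
      exact this
    have hyi : y i = f x i := bool_eq_of_ne_of_ne hiS (hsub i hiS)
    have hyc : y = upd f {i} c := by
      funext k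
      by_cases hk : k = i
      · subst hk; rw [upd_single_same, hfci, hyi]
      · rw [upd_single_ne f _ hk, hc_ne k hk]
    by_cases hl : l = j
    · subst hl
      have h1 : f y l = f c l := by rw [hyc]; exact offdiag hc c hij.symm
      have h2 := ihc l
      rw [hc_ne l hij.symm] at h2
      rw [h1, h2]
    · have h1 : f y l = f b l := by rw [hyb]; exact offdiag hc b hl
      have h2 := ihb l
      rw [hb_ne l hl] at h2
      rw [h1, h2]

/-- comm + idem: no "bad" coordinates. -/
lemma lemQ {n : ℕ} {f : (Fin n → Bool) → Fin n → Bool} (hc : IsCommutative' f)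
    (hi : f ∘ f = f) (x : Fin n → Bool) (l : Fin n) (hl : x l ≠ f x l) :
    f (upd f {l} x) l ≠ x l := by
  intro hbad
  have hsub : ∀ k, x k ≠ f x k → x k ≠ f x k := fun k h => h
  have := lemP hc _ x (f x) hsub rfl l
  rw [if_pos ⟨hl, hbad⟩] at this
  have hff : f (f x) l = f x l := congrFun (congrFun hi x) l
  rw [hff] at this
  exact hl this.symm

/-- comm + idem: f is constant on [x, f x]. -/
lemma lemR {n : ℕ} {f : (Fin n → Bool) → Fin n → Bool} (hc : IsCommutative' f)
    (hi : f ∘ f = f) (x y : Fin n → Bool)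
    (hsub : ∀ k, x k ≠ y k → x k ≠ f x k) : f y = f x := by
  funext l
  have := lemP hc _ x y hsub rfl l
  rw [this]
  by_cases hl : x l ≠ y l
  · rw [if_neg (fun h => lemQ hc hi x l (hsub l hl) h.2)]
  · rw [if_neg (fun h => hl h.1)]


/-- alternate definitions of Lille networks. -/
theorem stmt18 (n : ℕ) (f : (Fin n → Bool) → Fin n → Bool) :
    List.TFAE [
      IsCommutative' f ∧ f ∘ f = f,
      ∀ x : Fin n → Bool, ∀ y ∈ interval x (f x), interval y (f y) = interval y (f x),
      ∀ S T : Finset (Fin n), upd2 f S T = upd f (S ∪ T)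
    ] := by
  tfae_have 1 → 2 := by
    rintro ⟨hc, hi⟩ x y hy
    have : f y = f x := lemR hc hi x y (fun k hk => hy hk)
    rw [this]
  tfae_have 2 → 3 := by
    intro h2 S T
    funext x i
    set y := upd f S x with hydef
    have hy : y ∈ interval x (f x) := by
      intro k hk
      simp only [delta, Set.mem_setOf_eq, hydef, upd] at hk ⊢
      by_cases hkS : k ∈ S
      · rw [if_pos hkS] at hk; exact hk
      · rw [if_neg hkS] at hk; exact absurd rfl hk
    have h3 := h2 x y hy
    have hfy : f y = f x := by
      have ha : delta y (f y) ⊆ delta y (f x) := by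
        have hm : f y ∈ interval y (f y) := fun z hz => hz
        rw [h3] at hm
        exact hm
      have hb : delta y (f x) ⊆ delta y (f y) := by
        have hm : f x ∈ interval y (f x) := fun z hz => hz
        rw [← h3] at hm
        exact hm
      funext k
      have hiff : (y k ≠ f y k) ↔ (y k ≠ f x k) := ⟨fun h => ha h, fun h => hb h⟩
      cases hc1 : y k <;> cases hc2 : f y k <;> cases hc3 : f x k <;> simp_all
    show upd f T y i = upd f (S ∪ T) x i
    simp only [upd, hfy, Finset.mem_union, hydef]
    by_cases hT : i ∈ T <;> by_cases hS : i ∈ S <;> simp [hT, hS, upd, hfy] <;> exact congrFun hfy i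
  tfae_have 3 → 1 := by
    intro h3
    constructor
    · intro i j
      rw [h3 {i} {j}, h3 {j} {i}, Finset.union_comm]
    · have hu : upd f Finset.univ = f := by
        funext x i; simp [upd]
      calc f ∘ f = upd f Finset.univ ∘ upd f Finset.univ := by rw [hu]
        _ = upd2 f Finset.univ Finset.univ := rfl
        _ = upd f (Finset.univ ∪ Finset.univ) := h3 _ _
        _ = f := by rw [Finset.union_self, hu]
  tfae_finish
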